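/- Let p be a prime number, k a perfect field of characteristic p, W = W(k) the ring of p-typical Witt vectors of k, and σ : W → W its Frobenius automorphism. Let (a_n)_{n≥0} and (b_n)_{n≥0} be two sequences in W such that b_n = Σ_{j=0}^{n} p^j · σ^{n−j}(a_j) for every n ≥ 0, and such that both sequences tend to 0 p-adically (for every m there is N such that a_n ∈ p^m W and b_n ∈ p^m W for all n ≥ N). Then b_n ∈ p^{n+1} W for every n ≥ 0, and moreover for every m there is N such that b_n ∈ p^{n+1+m} W for all n ≥ N (i.e. b_n/p^{n+1} tends to 0 p-adically). -/

import Mathlib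

/-!
Statement 8: Let `p` be a prime, `k` a perfect field of characteristic `p`,
`W = W(k)` the Witt vectors with Frobenius `σ`.  If `(aₙ)` and `(bₙ)` are
sequences in `W` with `bₙ = ∑_{j=0}^n p^j σ^{n-j}(a_j)` which both tend to `0`
`p`-adically, then `p^{n+1} ∣ bₙ` for all `n`, and `bₙ/p^{n+1} → 0`
`p`-adically (i.e. for every `m`, eventually `p^{n+1+m} ∣ bₙ`).
-/

section Aux

variable {p : ℕ} [Fact p.Prime] {k : Type*} [Field k] [CharP k p] [PerfectRing k p]

private lemma witt_iter_dvd (t c : ℕ) {x : WittVector p k}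
    (h : (p : WittVector p k) ^ c ∣ x) :
    (p : WittVector p k) ^ c ∣
      ((WittVector.frobenius : WittVector p k →+* WittVector p k) ^ t) x := by
  obtain ⟨y, hy⟩ := h
  exact ⟨((WittVector.frobenius : WittVector p k →+* WittVector p k) ^ t) y, by
    rw [hy, map_mul, map_pow, map_natCast]⟩

private lemma witt_dvd_of_frobenius_dvd (c : ℕ) {x : WittVector p k}
    (h : (p : WittVector p k) ^ c ∣ WittVector.frobenius x) :
    (p : WittVector p k) ^ c ∣ x := by
  obtain ⟨y, hy⟩ := h
  obtain ⟨z, rfl⟩ := (WittVector.frobenius_bijective p k).surjective y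
  refine ⟨z, (WittVector.frobenius_bijective p k).injective ?_⟩
  rw [hy, map_mul, map_pow, map_natCast]

private lemma witt_dvd_of_iter_dvd (t c : ℕ) {x : WittVector p k}
    (h : (p : WittVector p k) ^ c ∣
      ((WittVector.frobenius : WittVector p k →+* WittVector p k) ^ t) x) :
    (p : WittVector p k) ^ c ∣ x := by
  induction t with
  | zero => simpa using h
  | succ t ih =>
    rw [pow_succ', RingHom.mul_def, RingHom.comp_apply] at h
    exact ih (witt_dvd_of_frobenius_dvd c h)

end Aux

theorem witt_vector_division_lemma (p : ℕ) [Fact p.Prime]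
    (k : Type*) [Field k] [CharP k p] [PerfectRing k p]
    (a b : ℕ → WittVector p k)
    (hab : ∀ n, b n = ∑ j ∈ Finset.range (n + 1),
      (p : WittVector p k) ^ j *
        (fun x : WittVector p k => WittVector.frobenius x)^[n - j] (a j))
    (ha : ∀ m : ℕ, ∃ N, ∀ n ≥ N, (p : WittVector p k) ^ m ∣ a n)
    (hb : ∀ m : ℕ, ∃ N, ∀ n ≥ N, (p : WittVector p k) ^ m ∣ b n) :
    (∀ n, (p : WittVector p k) ^ (n + 1) ∣ b n) ∧
      ∀ m : ℕ, ∃ N, ∀ n ≥ N, (p : WittVector p k) ^ (n + 1 + m) ∣ b n := by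
  set F : WittVector p k →+* WittVector p k := WittVector.frobenius with hF
  have hiterF : ∀ t : ℕ,
      (fun x : WittVector p k => WittVector.frobenius x)^[t] = ⇑(F ^ t) := by
    intro t
    rw [RingHom.coe_pow]
  have hab' : ∀ n, b n = ∑ j ∈ Finset.range (n + 1),
      (p : WittVector p k) ^ j * (F ^ (n - j)) (a j) := by
    intro n
    rw [hab n]
    exact Finset.sum_congr rfl fun j _ => by rw [hiterF]
  have key : ∀ m n : ℕ, (∀ j, n + 1 ≤ j → (p : WittVector p k) ^ m ∣ a j) →
      (p : WittVector p k) ^ (n + 1 + m) ∣ b n := by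
    intro m n hja
    obtain ⟨N₀, hN₀⟩ := hb (n + 1 + m)
    obtain ⟨N, hNN₀, hnN⟩ : ∃ N, N₀ ≤ N ∧ n ≤ N :=
      ⟨max N₀ n, le_max_left _ _, le_max_right _ _⟩
    have hiter : (F ^ (N - n)) (b n)
        = ∑ j ∈ Finset.range (n + 1), (p : WittVector p k) ^ j * (F ^ (N - j)) (a j) := by
      rw [hab' n, map_sum]
      refine Finset.sum_congr rfl fun j hj => ?_
      rw [Finset.mem_range] at hj
      rw [map_mul, map_pow, map_natCast, ← RingHom.comp_apply, ← RingHom.mul_def, ← pow_add]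
      have harith : N - n + (n - j) = N - j := by omega
      rw [harith]
    have hsplit : b N = (∑ j ∈ Finset.range (n + 1),
          (p : WittVector p k) ^ j * (F ^ (N - j)) (a j))
        + ∑ j ∈ Finset.Ico (n + 1) (N + 1),
          (p : WittVector p k) ^ j * (F ^ (N - j)) (a j) := by
      rw [hab' N, Finset.range_eq_Ico, ← Finset.sum_Ico_consecutive _ (Nat.zero_le (n + 1))
        (by omega : n + 1 ≤ N + 1), Finset.range_eq_Ico]
    have htail : (p : WittVector p k) ^ (n + 1 + m) ∣
        ∑ j ∈ Finset.Ico (n + 1) (N + 1), (p : WittVector p k) ^ j * (F ^ (N - j)) (a j) := by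
      refine Finset.dvd_sum fun j hj => ?_
      rw [Finset.mem_Ico] at hj
      have h1 : (p : WittVector p k) ^ (n + 1) ∣ (p : WittVector p k) ^ j :=
        pow_dvd_pow _ hj.1
      have h2 : (p : WittVector p k) ^ m ∣ (F ^ (N - j)) (a j) :=
        witt_iter_dvd _ _ (hja j hj.1)
      rw [pow_add]
      exact mul_dvd_mul h1 h2
    have hbN : (p : WittVector p k) ^ (n + 1 + m) ∣ b N := hN₀ N hNN₀
    have hdvd : (p : WittVector p k) ^ (n + 1 + m) ∣ (F ^ (N - n)) (b n) := by
      have heq : (F ^ (N - n)) (b n) = b N - ∑ j ∈ Finset.Ico (n + 1) (N + 1),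
          (p : WittVector p k) ^ j * (F ^ (N - j)) (a j) := by
        rw [hiter, hsplit]; ring
      rw [heq]
      exact dvd_sub hbN htail
    exact witt_dvd_of_iter_dvd _ _ hdvd
  constructor
  · intro n
    have := key 0 n (fun j _ => by simp)
    simpa using this
  · intro m
    obtain ⟨Na, hNa⟩ := ha m
    exact ⟨Na, fun n hn => key m n fun j hj => hNa j (by omega)⟩
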